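/- Let T > 0 and let a₁, a₂, b₁, b₂ ∈ (−1, ∞) satisfy a₁ + b₁ > −1, a₂ + b₂ > −1 and b₁ ≥ b₂. Then there exists a constant C = C(T, a₁, b₁, a₂, b₂) > 0 such that for every t ∈ [0, T] and every Borel measurable function f : [0, T] → [0, ∞), one has ∫₀ᵗ (t−s)^{a₁} s^{b₁} ( ∫₀ˢ (s−r)^{a₂} r^{b₂} f(r) dr ) ds ≤ C ∫₀ᵗ (t−s)^{a₂} s^{b₂} f(s) ds. -/

import Mathlib

open MeasureTheory Set


lemma lint_pow_right {r m c : ℝ} (hc : -1 < c) (hrm : r < m) :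
    ∫⁻ s in Ioo r m, ENNReal.ofReal ((s - r) ^ c) = ENNReal.ofReal ((m - r) ^ (c + 1) / (c + 1)) := by
  have hii : IntervalIntegrable (fun s : ℝ => (s - r) ^ c) volume r m := by
    have := (intervalIntegral.intervalIntegrable_rpow' hc (a := r - r) (b := m - r)).comp_sub_right r
    simpa using this
  have hint : IntegrableOn (fun s : ℝ => (s - r) ^ c) (Ioo r m) := by
    have := hii.1
    rwa [integrableOn_Ioc_iff_integrableOn_Ioo] at this
  rw [← ofReal_integral_eq_lintegral_ofReal hint]
  · congr 1
    rw [← MeasureTheory.integral_Ioc_eq_integral_Ioo,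
      ← intervalIntegral.integral_of_le hrm.le]
    rw [show (fun s : ℝ => (s - r) ^ c) = (fun s : ℝ => ((fun x : ℝ => x ^ c) (s - r))) from rfl]
    rw [intervalIntegral.integral_comp_sub_right (fun x : ℝ => x ^ c) r]
    rw [integral_rpow (Or.inl hc)]
    rw [sub_self, Real.zero_rpow (by linarith), sub_zero]
  · filter_upwards [self_mem_ae_restrict measurableSet_Ioo] with x hx
    exact Real.rpow_nonneg (by linarith [hx.1]) _

lemma lint_pow_left {m t a : ℝ} (ha : -1 < a) (hmt : m < t) :
    ∫⁻ s in Ioo m t, ENNReal.ofReal ((t - s) ^ a) = ENNReal.ofReal ((t - m) ^ (a + 1) / (a + 1)) := by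
  have hii : IntervalIntegrable (fun s : ℝ => (t - s) ^ a) volume m t := by
    have := (intervalIntegral.intervalIntegrable_rpow' ha (a := t - t) (b := t - m)).comp_sub_left t
    simpa using this.symm
  have hint : IntegrableOn (fun s : ℝ => (t - s) ^ a) (Ioo m t) := by
    have := hii.1
    rwa [integrableOn_Ioc_iff_integrableOn_Ioo] at this
  rw [← ofReal_integral_eq_lintegral_ofReal hint]
  · congr 1
    rw [← MeasureTheory.integral_Ioc_eq_integral_Ioo,
      ← intervalIntegral.integral_of_le hmt.le]
    rw [show (fun s : ℝ => (t - s) ^ a) = (fun s : ℝ => ((fun x : ℝ => x ^ a) (t - s))) from rfl]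
    rw [intervalIntegral.integral_comp_sub_left (fun x : ℝ => x ^ a) t]
    rw [sub_self]
    rw [integral_rpow (Or.inl ha)]
    rw [Real.zero_rpow (by linarith), sub_zero]
  · filter_upwards [self_mem_ae_restrict measurableSet_Ioo] with x hx
    exact Real.rpow_nonneg (by linarith [hx.2]) _

lemma hp_neg {u v e : ℝ} (hv : 0 < v) (h1 : v / 2 ≤ u) (he : e ≤ 0) :
    u ^ e ≤ 2 ^ (-e) * v ^ e := by
  have h2 : (0:ℝ) < v / 2 := by linarith
  calc u ^ e ≤ (v / 2) ^ e := Real.rpow_le_rpow_of_nonpos h2 h1 he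
    _ = 2 ^ (-e) * v ^ e := by
        rw [Real.div_rpow hv.le (by norm_num : (0:ℝ) ≤ 2), div_eq_mul_inv,
          ← Real.rpow_neg (by norm_num : (0:ℝ) ≤ 2), mul_comm]

lemma rpow_between {u v e : ℝ} (hv : 0 < v) (h1 : v / 2 ≤ u) (h2 : u ≤ v) :
    u ^ e ≤ max 1 (2 ^ (-e)) * v ^ e := by
  have hu : 0 < u := lt_of_lt_of_le (by linarith) h1
  rcases le_or_gt 0 e with he | he
  · calc u ^ e ≤ v ^ e := Real.rpow_le_rpow hu.le h2 he
      _ ≤ max 1 (2 ^ (-e)) * v ^ e :=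
        le_mul_of_one_le_left (Real.rpow_nonneg hv.le e) (le_max_left _ _)
  · calc u ^ e ≤ 2 ^ (-e) * v ^ e := hp_neg hv h1 he.le
      _ ≤ max 1 (2 ^ (-e)) * v ^ e :=
        mul_le_mul_of_nonneg_right (le_max_right _ _) (Real.rpow_nonneg hv.le e)


lemma kernel_bound (T a₁ a₂ b₁ : ℝ) (hT : 0 < T) (ha₁ : -1 < a₁)
    (hab₂β : -1 < a₂ + min b₁ 0) (hab₁β : 0 < a₁ + min b₁ 0 + 1) :
    ∃ C0 : ℝ, 0 < C0 ∧ ∀ r t : ℝ, 0 < r → r < t → t ≤ T →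
      ∫⁻ s in Ioo r t, ENNReal.ofReal ((t - s) ^ a₁ * s ^ b₁ * (s - r) ^ a₂) ≤
        ENNReal.ofReal (C0 * (t - r) ^ a₂) := by
  set β : ℝ := min b₁ 0 with hβ
  have hβ0 : β ≤ 0 := min_le_right _ _
  have e1 : (0:ℝ) < a₂ + β + 1 := by linarith
  have ea1 : (0:ℝ) < a₁ + 1 := by linarith
  set Kb : ℝ := max (T ^ b₁) 1 with hKb
  have hKb0 : 0 < Kb := lt_of_lt_of_le one_pos (le_max_right _ _)
  set Ka1 : ℝ := max 1 (2 ^ (-a₁)) with hKa1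
  have hKa10 : 0 < Ka1 := lt_of_lt_of_le one_pos (le_max_left _ _)
  set Ka2 : ℝ := max 1 (2 ^ (-a₂)) with hKa2
  have hKa20 : 0 < Ka2 := lt_of_lt_of_le one_pos (le_max_left _ _)
  set Kβ : ℝ := (2:ℝ) ^ (-β) with hKβ
  have hKβ0 : 0 < Kβ := Real.rpow_pos_of_pos (by norm_num) _
  set TT : ℝ := T ^ (a₁ + β + 1) with hTT
  have hTT0 : 0 < TT := Real.rpow_pos_of_pos hT _
  set C1 : ℝ := Ka1 * Kb * TT / (a₂ + β + 1) with hC1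
  have hC10 : 0 < C1 := div_pos (by positivity) e1
  set C2 : ℝ := Kb * Kβ * Ka2 * TT / (a₁ + 1) with hC2
  have hC20 : 0 < C2 := div_pos (by positivity) ea1
  refine ⟨C1 + C2, by positivity, ?_⟩
  intro r t hr hrt htT
  have htr : (0:ℝ) < t - r := by linarith
  set m : ℝ := (r + t) / 2 with hm
  have hrm : r < m := by rw [hm]; linarith
  have hmt : m < t := by rw [hm]; linarith
  have hmr : m - r = (t - r) / 2 := by rw [hm]; ring
  have htm : t - m = (t - r) / 2 := by rw [hm]; ring
  have htrT : t - r ≤ T := by linarith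
  -- bound on s^b₁ for 0 < s ≤ T : s^b₁ ≤ Kb * s^β
  have hsb : ∀ s : ℝ, 0 < s → s ≤ T → s ^ b₁ ≤ Kb * s ^ β := by
    intro s hs hsT
    rcases le_or_gt 0 b₁ with hb | hb
    · have hβe : β = 0 := min_eq_right hb
      rw [hβe, Real.rpow_zero, mul_one]
      calc s ^ b₁ ≤ T ^ b₁ := Real.rpow_le_rpow hs.le hsT hb
        _ ≤ Kb := le_max_left _ _
    · have hβe : β = b₁ := min_eq_left hb.le
      rw [hβe]
      exact le_mul_of_one_le_left (Real.rpow_nonneg hs.le _) (le_max_right _ _)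
  -- part 1
  have part1 : ∫⁻ s in Ioo r m, ENNReal.ofReal ((t - s) ^ a₁ * s ^ b₁ * (s - r) ^ a₂) ≤
      ENNReal.ofReal (C1 * (t - r) ^ a₂) := by
    set D1 : ℝ := Ka1 * (t - r) ^ a₁ * Kb with hD1
    have hD10 : 0 ≤ D1 := by positivity
    calc ∫⁻ s in Ioo r m, ENNReal.ofReal ((t - s) ^ a₁ * s ^ b₁ * (s - r) ^ a₂)
        ≤ ∫⁻ s in Ioo r m, ENNReal.ofReal (D1 * (s - r) ^ (a₂ + β)) := by
          apply setLIntegral_mono (by fun_prop)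
          intro s hs
          apply ENNReal.ofReal_le_ofReal
          have hs0 : 0 < s := lt_trans hr hs.1
          have hsr : 0 < s - r := by linarith [hs.1]
          have h_ts : (t - s) ^ a₁ ≤ Ka1 * (t - r) ^ a₁ :=
            rpow_between htr (by rw [← htm]; linarith [hs.2]) (by linarith [hs.1])
          have h_sb : s ^ b₁ ≤ Kb * (s - r) ^ β := by
            calc s ^ b₁ ≤ Kb * s ^ β := hsb s hs0 (by linarith [hs.2])
              _ ≤ Kb * (s - r) ^ β := by
                  apply mul_le_mul_of_nonneg_left _ hKb0.le
                  exact Real.rpow_le_rpow_of_nonpos hsr (by linarith) hβ0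
          calc (t - s) ^ a₁ * s ^ b₁ * (s - r) ^ a₂
              ≤ (Ka1 * (t - r) ^ a₁) * (Kb * (s - r) ^ β) * (s - r) ^ a₂ := by
                apply mul_le_mul_of_nonneg_right _ (Real.rpow_nonneg hsr.le _)
                exact mul_le_mul h_ts h_sb (Real.rpow_nonneg hs0.le _) (by positivity)
            _ = D1 * (s - r) ^ (a₂ + β) := by
                rw [hD1, Real.rpow_add hsr]; ring
      _ = ENNReal.ofReal D1 * ∫⁻ s in Ioo r m, ENNReal.ofReal ((s - r) ^ (a₂ + β)) := by
          rw [← lintegral_const_mul' _ _ ENNReal.ofReal_ne_top]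
          apply setLIntegral_congr_fun measurableSet_Ioo
          intro s hs
          beta_reduce
          rw [ENNReal.ofReal_mul hD10]
      _ = ENNReal.ofReal D1 * ENNReal.ofReal ((m - r) ^ (a₂ + β + 1) / (a₂ + β + 1)) := by
          rw [lint_pow_right (by linarith) hrm]
      _ ≤ ENNReal.ofReal (C1 * (t - r) ^ a₂) := by
          rw [← ENNReal.ofReal_mul hD10]
          apply ENNReal.ofReal_le_ofReal
          have h1 : (m - r) ^ (a₂ + β + 1) ≤ (t - r) ^ (a₂ + β + 1) := by
            rw [hmr]
            exact Real.rpow_le_rpow (by positivity) (by linarith) e1.le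
          have h3 : (t - r) ^ a₁ * (t - r) ^ (a₂ + β + 1) = (t - r) ^ (a₁ + β + 1) * (t - r) ^ a₂ := by
            rw [← Real.rpow_add htr, ← Real.rpow_add htr]; ring_nf
          have h2 : (t - r) ^ (a₁ + β + 1) ≤ TT := Real.rpow_le_rpow htr.le htrT (by linarith)
          calc D1 * ((m - r) ^ (a₂ + β + 1) / (a₂ + β + 1))
              = Ka1 * Kb / (a₂ + β + 1) * ((t - r) ^ a₁ * (m - r) ^ (a₂ + β + 1)) := by
                rw [hD1]; ring
            _ ≤ Ka1 * Kb / (a₂ + β + 1) * ((t - r) ^ a₁ * (t - r) ^ (a₂ + β + 1)) := by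
                gcongr <;> exact Real.rpow_nonneg htr.le _
            _ = Ka1 * Kb / (a₂ + β + 1) * ((t - r) ^ (a₁ + β + 1) * (t - r) ^ a₂) := by rw [h3]
            _ ≤ Ka1 * Kb / (a₂ + β + 1) * (TT * (t - r) ^ a₂) := by
                gcongr <;> exact Real.rpow_nonneg htr.le _
            _ = C1 * (t - r) ^ a₂ := by rw [hC1]; ring
  -- part 2
  have part2 : ∫⁻ s in Ioo m t, ENNReal.ofReal ((t - s) ^ a₁ * s ^ b₁ * (s - r) ^ a₂) ≤
      ENNReal.ofReal (C2 * (t - r) ^ a₂) := by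
    set D2 : ℝ := Kb * Kβ * (t - r) ^ β * (Ka2 * (t - r) ^ a₂) with hD2
    have hD20 : 0 ≤ D2 := by positivity
    calc ∫⁻ s in Ioo m t, ENNReal.ofReal ((t - s) ^ a₁ * s ^ b₁ * (s - r) ^ a₂)
        ≤ ∫⁻ s in Ioo m t, ENNReal.ofReal (D2 * (t - s) ^ a₁) := by
          apply setLIntegral_mono (by fun_prop)
          intro s hs
          apply ENNReal.ofReal_le_ofReal
          have hs0 : 0 < s := lt_trans (lt_trans hr hrm) hs.1
          have hts : 0 < t - s := by linarith [hs.2]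
          have hsr : 0 < s - r := by linarith [hs.1]
          have h_sb : s ^ b₁ ≤ Kb * (Kβ * (t - r) ^ β) := by
            calc s ^ b₁ ≤ Kb * s ^ β := hsb s hs0 (by linarith [hs.2])
              _ ≤ Kb * (Kβ * (t - r) ^ β) := by
                  apply mul_le_mul_of_nonneg_left _ hKb0.le
                  exact hp_neg htr (by
                    have h' : (t - r) / 2 ≤ m := by rw [hm]; linarith
                    linarith [hs.1]) hβ0
          have h_sr : (s - r) ^ a₂ ≤ Ka2 * (t - r) ^ a₂ :=
            rpow_between htr (by rw [← hmr]; linarith [hs.1]) (by linarith [hs.2])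
          calc (t - s) ^ a₁ * s ^ b₁ * (s - r) ^ a₂
              ≤ (t - s) ^ a₁ * (Kb * (Kβ * (t - r) ^ β)) * (Ka2 * (t - r) ^ a₂) := by
                apply mul_le_mul _ h_sr (Real.rpow_nonneg hsr.le _) (by positivity)
                exact mul_le_mul_of_nonneg_left h_sb (Real.rpow_nonneg hts.le _)
            _ = D2 * (t - s) ^ a₁ := by rw [hD2]; ring
      _ = ENNReal.ofReal D2 * ∫⁻ s in Ioo m t, ENNReal.ofReal ((t - s) ^ a₁) := by
          rw [← lintegral_const_mul' _ _ ENNReal.ofReal_ne_top]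
          apply setLIntegral_congr_fun measurableSet_Ioo
          intro s hs
          beta_reduce
          rw [ENNReal.ofReal_mul hD20]
      _ = ENNReal.ofReal D2 * ENNReal.ofReal ((t - m) ^ (a₁ + 1) / (a₁ + 1)) := by
          rw [lint_pow_left ha₁ hmt]
      _ ≤ ENNReal.ofReal (C2 * (t - r) ^ a₂) := by
          rw [← ENNReal.ofReal_mul hD20]
          apply ENNReal.ofReal_le_ofReal
          have h1 : (t - m) ^ (a₁ + 1) ≤ (t - r) ^ (a₁ + 1) := by
            rw [htm]
            exact Real.rpow_le_rpow (by positivity) (by linarith) ea1.le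
          have h3 : (t - r) ^ β * (t - r) ^ (a₁ + 1) = (t - r) ^ (a₁ + β + 1) := by
            rw [← Real.rpow_add htr]; ring_nf
          have h2 : (t - r) ^ (a₁ + β + 1) ≤ TT := Real.rpow_le_rpow htr.le htrT (by linarith)
          calc D2 * ((t - m) ^ (a₁ + 1) / (a₁ + 1))
              = Kb * Kβ * Ka2 / (a₁ + 1) * ((t - r) ^ β * (t - m) ^ (a₁ + 1)) * (t - r) ^ a₂ := by
                rw [hD2]; ring
            _ ≤ Kb * Kβ * Ka2 / (a₁ + 1) * ((t - r) ^ β * (t - r) ^ (a₁ + 1)) * (t - r) ^ a₂ := by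
                gcongr <;> exact Real.rpow_nonneg htr.le _
            _ = Kb * Kβ * Ka2 / (a₁ + 1) * (t - r) ^ (a₁ + β + 1) * (t - r) ^ a₂ := by rw [h3]
            _ ≤ Kb * Kβ * Ka2 / (a₁ + 1) * TT * (t - r) ^ a₂ := by
                gcongr <;> exact Real.rpow_nonneg htr.le _
            _ = C2 * (t - r) ^ a₂ := by rw [hC2]; ring
  -- combine
  calc ∫⁻ s in Ioo r t, ENNReal.ofReal ((t - s) ^ a₁ * s ^ b₁ * (s - r) ^ a₂)
      ≤ ∫⁻ s in Ioo r m ∪ Ico m t, ENNReal.ofReal ((t - s) ^ a₁ * s ^ b₁ * (s - r) ^ a₂) := by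
        apply lintegral_mono_set
        intro x hx
        rcases lt_or_ge x m with h | h
        · exact Or.inl ⟨hx.1, h⟩
        · exact Or.inr ⟨h, hx.2⟩
    _ ≤ (∫⁻ s in Ioo r m, ENNReal.ofReal ((t - s) ^ a₁ * s ^ b₁ * (s - r) ^ a₂)) +
        ∫⁻ s in Ico m t, ENNReal.ofReal ((t - s) ^ a₁ * s ^ b₁ * (s - r) ^ a₂) :=
        lintegral_union_le _ _ _
    _ = (∫⁻ s in Ioo r m, ENNReal.ofReal ((t - s) ^ a₁ * s ^ b₁ * (s - r) ^ a₂)) +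
        ∫⁻ s in Ioo m t, ENNReal.ofReal ((t - s) ^ a₁ * s ^ b₁ * (s - r) ^ a₂) := by
        rw [setLIntegral_congr (MeasureTheory.Ioo_ae_eq_Ico (μ := volume) (a := m) (b := t)).symm]
    _ ≤ ENNReal.ofReal (C1 * (t - r) ^ a₂) + ENNReal.ofReal (C2 * (t - r) ^ a₂) :=
        add_le_add part1 part2
    _ = ENNReal.ofReal ((C1 + C2) * (t - r) ^ a₂) := by
        rw [← ENNReal.ofReal_add (by positivity) (by positivity), ← add_mul]

/-- when `b₂ ≤ b₁`, the composition of the two singular Volterra kernels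
is bounded by the integral against the second kernel alone. -/
theorem volterra_kernel_composition_ordered
    (T : ℝ) (hT : 0 < T) (a₁ a₂ b₁ b₂ : ℝ)
    (ha₁ : -1 < a₁) (ha₂ : -1 < a₂) (hb₁ : -1 < b₁) (hb₂ : -1 < b₂)
    (hab₁ : -1 < a₁ + b₁) (hab₂ : -1 < a₂ + b₂) (hb : b₂ ≤ b₁) :
    ∃ C : ℝ, 0 < C ∧ ∀ t ∈ Icc (0 : ℝ) T, ∀ f : ℝ → ℝ,
      Measurable f → (∀ s, 0 ≤ f s) →
      (∫⁻ s in Ioo (0 : ℝ) t, ENNReal.ofReal ((t - s) ^ a₁ * s ^ b₁) *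
          ∫⁻ r in Ioo (0 : ℝ) s, ENNReal.ofReal ((s - r) ^ a₂ * r ^ b₂ * f r)) ≤
        ENNReal.ofReal C *
          ∫⁻ s in Ioo (0 : ℝ) t, ENNReal.ofReal ((t - s) ^ a₂ * s ^ b₂ * f s) := by
  have hmin1 : -1 < a₂ + min b₁ 0 := by
    rcases le_or_gt 0 b₁ with h | h
    · rw [min_eq_right h]; linarith
    · rw [min_eq_left h.le]; linarith
  have hmin2 : 0 < a₁ + min b₁ 0 + 1 := by
    rcases le_or_gt 0 b₁ with h | h
    · rw [min_eq_right h]; linarith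
    · rw [min_eq_left h.le]; linarith
  obtain ⟨C0, hC00, hK⟩ := kernel_bound T a₁ a₂ b₁ hT ha₁ hmin1 hmin2
  refine ⟨C0, hC00, ?_⟩
  intro t ht f hf hf0
  rcases eq_or_lt_of_le ht.1 with h0 | h0
  · rw [← h0]
    simp
  -- main case: 0 < t
  set g : ℝ → ℝ → ENNReal := fun s r =>
    ENNReal.ofReal ((t - s) ^ a₁ * s ^ b₁) *
      ENNReal.ofReal ((s - r) ^ a₂ * r ^ b₂ * f r) with hg
  set G : ℝ → ℝ → ENNReal := fun s r => if r < s then g s r else 0 with hG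
  have hgmeas : Measurable (fun q : ℝ × ℝ => g q.1 q.2) := by
    refine Measurable.mul (f := fun q : ℝ × ℝ => ENNReal.ofReal ((t - q.1) ^ a₁ * q.1 ^ b₁)) (g := fun q : ℝ × ℝ => ENNReal.ofReal ((q.1 - q.2) ^ a₂ * q.2 ^ b₂ * f q.2)) ?_ ?_
    · fun_prop
    · fun_prop
  have hGmeas : Measurable (Function.uncurry G) := by
    have : Function.uncurry G = fun q : ℝ × ℝ => if q.2 < q.1 then g q.1 q.2 else 0 := rfl
    rw [this]
    exact Measurable.ite (measurableSet_lt measurable_snd measurable_fst) hgmeas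
      measurable_const
  -- Step B : inner integral as integral over Ioo 0 t
  have hB : ∀ s ∈ Ioo (0:ℝ) t, (∫⁻ r in Ioo (0:ℝ) s, g s r) = ∫⁻ r in Ioo (0:ℝ) t, G s r := by
    intro s hs
    have h1 : (fun r => G s r) = (Iio s).indicator (g s) := by
      funext r
      simp [hG, Set.indicator_apply]
    rw [h1, lintegral_indicator measurableSet_Iio,
      Measure.restrict_restrict measurableSet_Iio]
    have h2 : Iio s ∩ Ioo 0 t = Ioo 0 s := by
      ext x
      simp only [mem_inter_iff, mem_Iio, mem_Ioo]
      constructor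
      · rintro ⟨h1', h2', _⟩; exact ⟨h2', h1'⟩
      · rintro ⟨h1', h2'⟩; exact ⟨h2', h1', h2'.trans hs.2⟩
    rw [h2]
  -- Step D : inner integral in s
  have hD : ∀ r ∈ Ioo (0:ℝ) t, (∫⁻ s in Ioo (0:ℝ) t, G s r) = ∫⁻ s in Ioo r t, g s r := by
    intro r hr
    have h1 : (fun s => G s r) = (Ioi r).indicator (fun s => g s r) := by
      funext s
      simp [hG, Set.indicator_apply]
    rw [h1, lintegral_indicator measurableSet_Ioi,
      Measure.restrict_restrict measurableSet_Ioi]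
    have h2 : Ioi r ∩ Ioo 0 t = Ioo r t := by
      ext x
      simp only [mem_inter_iff, mem_Ioi, mem_Ioo]
      constructor
      · rintro ⟨h1', _, h3'⟩; exact ⟨h1', h3'⟩
      · rintro ⟨h1', h2'⟩; exact ⟨h1', hr.1.trans h1', h2'⟩
    rw [h2]
  -- Step E : kernel bound on inner s-integral
  have hE : ∀ r ∈ Ioo (0:ℝ) t, (∫⁻ s in Ioo r t, g s r) ≤
      ENNReal.ofReal C0 * ENNReal.ofReal ((t - r) ^ a₂ * r ^ b₂ * f r) := by
    intro r hr
    have hfr : 0 ≤ r ^ b₂ * f r := mul_nonneg (Real.rpow_nonneg hr.1.le _) (hf0 r)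
    have step1 : (∫⁻ s in Ioo r t, g s r) =
        (∫⁻ s in Ioo r t, ENNReal.ofReal ((t - s) ^ a₁ * s ^ b₁ * (s - r) ^ a₂)) *
          ENNReal.ofReal (r ^ b₂ * f r) := by
      rw [← lintegral_mul_const' _ _ ENNReal.ofReal_ne_top]
      apply setLIntegral_congr_fun measurableSet_Ioo
      intro s hs
      beta_reduce
      have h1 : (0:ℝ) ≤ (t - s) ^ a₁ * s ^ b₁ :=
        mul_nonneg (Real.rpow_nonneg (by linarith [hs.2]) _)
          (Real.rpow_nonneg (by linarith [hr.1, hs.1]) _)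
      have h2 : (0:ℝ) ≤ (t - s) ^ a₁ * s ^ b₁ * (s - r) ^ a₂ :=
        mul_nonneg h1 (Real.rpow_nonneg (by linarith [hs.1]) _)
      rw [hg]
      dsimp only
      rw [← ENNReal.ofReal_mul h1, ← ENNReal.ofReal_mul h2]
      ring_nf
    rw [step1]
    calc (∫⁻ s in Ioo r t, ENNReal.ofReal ((t - s) ^ a₁ * s ^ b₁ * (s - r) ^ a₂)) *
          ENNReal.ofReal (r ^ b₂ * f r)
        ≤ ENNReal.ofReal (C0 * (t - r) ^ a₂) * ENNReal.ofReal (r ^ b₂ * f r) :=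
          mul_le_mul_left (hK r t hr.1 hr.2 ht.2) _
      _ = ENNReal.ofReal C0 * ENNReal.ofReal ((t - r) ^ a₂ * r ^ b₂ * f r) := by
          rw [← ENNReal.ofReal_mul (mul_nonneg hC00.le (Real.rpow_nonneg (by linarith [hr.2]) _)), ← ENNReal.ofReal_mul hC00.le]
          ring_nf
  -- main chain
  calc (∫⁻ s in Ioo (0 : ℝ) t, ENNReal.ofReal ((t - s) ^ a₁ * s ^ b₁) *
          ∫⁻ r in Ioo (0 : ℝ) s, ENNReal.ofReal ((s - r) ^ a₂ * r ^ b₂ * f r))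
      = ∫⁻ s in Ioo (0:ℝ) t, ∫⁻ r in Ioo (0:ℝ) t, G s r := by
        apply setLIntegral_congr_fun measurableSet_Ioo
        intro s hs
        beta_reduce
        rw [← hB s hs, hg]
        exact (lintegral_const_mul' _ _ ENNReal.ofReal_ne_top).symm
    _ = ∫⁻ r in Ioo (0:ℝ) t, ∫⁻ s in Ioo (0:ℝ) t, G s r :=
        lintegral_lintegral_swap hGmeas.aemeasurable
    _ ≤ ∫⁻ r in Ioo (0:ℝ) t, ENNReal.ofReal C0 * ENNReal.ofReal ((t - r) ^ a₂ * r ^ b₂ * f r) := by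
        apply setLIntegral_mono (by fun_prop)
        intro r hr
        rw [hD r hr]
        exact hE r hr
    _ = ENNReal.ofReal C0 * ∫⁻ s in Ioo (0:ℝ) t, ENNReal.ofReal ((t - s) ^ a₂ * s ^ b₂ * f s) :=
        lintegral_const_mul' _ _ ENNReal.ofReal_ne_top
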